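/- For each fixed vector v ∈ ℝ³, the function ψ = ⟨v, N⟩ on a nodoid N_{t₀} (with N the unit normal) satisfies the Jacobi equation Δψ + ‖S‖²ψ = 0; and ψ = ⟨e₃, N⟩ vanishes on the boundary ∂N_{t₀} if and only if t₀ ∈ πℕ, while ψ = ⟨e_i, N⟩ for i = 1,2 vanishes on ∂N_{t₀} if and only if t₀ ∈ π/2 + πℕ. -/

import Mathlib

open Real

/-- Points of `ℝ³` modeled as triples. -/
abbrev R3 := ℝ × ℝ × ℝ

/-- Euclidean dot product on `ℝ³`. -/
def dot3 (u v : R3) : ℝ := u.1 * v.1 + u.2.1 * v.2.1 + u.2.2 * v.2.2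

/-- Cross product on `ℝ³`. -/
def cross3 (u v : R3) : R3 :=
  (u.2.1 * v.2.2 - u.2.2 * v.2.1, u.2.2 * v.1 - u.1 * v.2.2, u.1 * v.2.1 - u.2.1 * v.1)

/-- Euclidean norm on `ℝ³`. -/
noncomputable def norm3 (u : R3) : ℝ := Real.sqrt (dot3 u u)

/-- Partial derivative in the first coordinate. -/
noncomputable def pd1 {E : Type*} [NormedAddCommGroup E] [NormedSpace ℝ E]
    (f : ℝ × ℝ → E) (p : ℝ × ℝ) : E := deriv (fun s => f (s, p.2)) p.1

/-- Partial derivative in the second coordinate. -/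
noncomputable def pd2 {E : Type*} [NormedAddCommGroup E] [NormedSpace ℝ E]
    (f : ℝ × ℝ → E) (p : ℝ × ℝ) : E := deriv (fun s => f (p.1, s)) p.2

/-- First fundamental form coefficient `g₁₁ = ⟨X_x, X_x⟩`. -/
noncomputable def ffE (X : ℝ × ℝ → R3) (p : ℝ × ℝ) : ℝ := dot3 (pd1 X p) (pd1 X p)

/-- First fundamental form coefficient `g₁₂ = ⟨X_x, X_y⟩`. -/
noncomputable def ffF (X : ℝ × ℝ → R3) (p : ℝ × ℝ) : ℝ := dot3 (pd1 X p) (pd2 X p)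

/-- First fundamental form coefficient `g₂₂ = ⟨X_y, X_y⟩`. -/
noncomputable def ffG (X : ℝ × ℝ → R3) (p : ℝ × ℝ) : ℝ := dot3 (pd2 X p) (pd2 X p)

/-- The (unnormalized) normal vector `X_x × X_y`. -/
noncomputable def normalVec (X : ℝ × ℝ → R3) (p : ℝ × ℝ) : R3 := cross3 (pd1 X p) (pd2 X p)

/-- The unit normal `N = (X_x × X_y)/‖X_x × X_y‖`. -/
noncomputable def unitNormal (X : ℝ × ℝ → R3) (p : ℝ × ℝ) : R3 :=
  (norm3 (normalVec X p))⁻¹ • normalVec X p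

/-- Second fundamental form coefficient `h₁₁ = ⟨X_xx, N⟩`. -/
noncomputable def sfh11 (X : ℝ × ℝ → R3) (p : ℝ × ℝ) : ℝ :=
  dot3 (pd1 (pd1 X) p) (unitNormal X p)

/-- Second fundamental form coefficient `h₁₂ = ⟨X_xy, N⟩`. -/
noncomputable def sfh12 (X : ℝ × ℝ → R3) (p : ℝ × ℝ) : ℝ :=
  dot3 (pd2 (pd1 X) p) (unitNormal X p)

/-- Second fundamental form coefficient `h₂₂ = ⟨X_yy, N⟩`. -/
noncomputable def sfh22 (X : ℝ × ℝ → R3) (p : ℝ × ℝ) : ℝ :=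
  dot3 (pd2 (pd2 X) p) (unitNormal X p)

/-- Mean curvature `H = (h₁₁g₂₂ − 2h₁₂g₁₂ + h₂₂g₁₁)/(2(g₁₁g₂₂ − g₁₂²))`. -/
noncomputable def meanCurv (X : ℝ × ℝ → R3) (p : ℝ × ℝ) : ℝ :=
  (sfh11 X p * ffG X p - 2 * sfh12 X p * ffF X p + sfh22 X p * ffE X p) /
    (2 * (ffE X p * ffG X p - ffF X p ^ 2))

/-- Gaussian curvature `K = (h₁₁h₂₂ − h₁₂²)/(g₁₁g₂₂ − g₁₂²)`. -/
noncomputable def gaussCurv (X : ℝ × ℝ → R3) (p : ℝ × ℝ) : ℝ :=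
  (sfh11 X p * sfh22 X p - sfh12 X p ^ 2) / (ffE X p * ffG X p - ffF X p ^ 2)

/-- Surface area density `√(g₁₁g₂₂ − g₁₂²) = ‖X_x × X_y‖`. -/
noncomputable def areaDensity (X : ℝ × ℝ → R3) (p : ℝ × ℝ) : ℝ := norm3 (normalVec X p)

/-- Laplace–Beltrami operator of the surface `X` applied to `u`,
`Δu = (1/√det g) [∂₁((g₂₂ ∂₁u − g₁₂ ∂₂u)/√det g) + ∂₂((g₁₁ ∂₂u − g₁₂ ∂₁u)/√det g)]`. -/
noncomputable def laplaceBeltrami (X : ℝ × ℝ → R3) (u : ℝ × ℝ → ℝ) (p : ℝ × ℝ) : ℝ :=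
  (pd1 (fun q => (ffG X q * pd1 u q - ffF X q * pd2 u q) / areaDensity X q) p +
   pd2 (fun q => (ffE X q * pd2 u q - ffF X q * pd1 u q) / areaDensity X q) p) /
    areaDensity X p

/-- Radial component `x(t) = (cos t + √(cos²t + a))/(2|H|)` of the nodary curve. -/
noncomputable def nodx (H a t : ℝ) : ℝ :=
  (Real.cos t + Real.sqrt (Real.cos t ^ 2 + a)) / (2 * |H|)

/-- Height component
`z(t) = (1/(2|H|)) ∫₀ᵗ (cos τ + √(cos²τ + a)) cos τ / √(cos²τ + a) dτ` of the nodary curve. -/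
noncomputable def nodz (H a t : ℝ) : ℝ :=
  (1 / (2 * |H|)) *
    ∫ τ in (0 : ℝ)..t,
      (Real.cos τ + Real.sqrt (Real.cos τ ^ 2 + a)) * Real.cos τ /
        Real.sqrt (Real.cos τ ^ 2 + a)

/-- The nodoid `N(t,θ) = (x(t) cos θ, x(t) sin θ, z(t))`, the surface of revolution of
the nodary curve around the z-axis. -/
noncomputable def nodoid (H a : ℝ) (p : ℝ × ℝ) : R3 :=
  (nodx H a p.1 * Real.cos p.2, nodx H a p.1 * Real.sin p.2, nodz H a p.1)

/-- The unit normal field `N(t,θ) = (cos t cos θ, cos t sin θ, sin t)` on the nodoid. -/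
noncomputable def nodN (p : ℝ × ℝ) : R3 :=
  (Real.cos p.1 * Real.cos p.2, Real.cos p.1 * Real.sin p.2, Real.sin p.1)

/-- The standard basis vectors of `ℝ³`. -/
def e1 : R3 := (1, 0, 0)
def e2 : R3 := (0, 1, 0)
def e3 : R3 := (0, 0, 1)

noncomputable def Qa (a t : ℝ) : ℝ := Real.sqrt (Real.cos t ^ 2 + a)
noncomputable def ndx' (H a t : ℝ) : ℝ :=
  -Real.sin t * (Real.cos t + Qa a t) / (2 * |H| * Qa a t)
noncomputable def ndz' (H a t : ℝ) : ℝ :=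
  Real.cos t * (Real.cos t + Qa a t) / (2 * |H| * Qa a t)
noncomputable def ndx'' (H a t : ℝ) : ℝ :=
  ((Real.sin t ^ 2 - Real.cos t ^ 2) * Qa a t ^ 2 - Real.cos t ^ 2 * Real.sin t ^ 2
    - Real.cos t * Qa a t ^ 3) / (2 * |H| * Qa a t ^ 3)
noncomputable def ndz'' (H a t : ℝ) : ℝ :=
  (-2 * Real.cos t * Real.sin t * Qa a t ^ 2 + Real.cos t ^ 3 * Real.sin t
    - Real.sin t * Qa a t ^ 3) / (2 * |H| * Qa a t ^ 3)

lemma Qa_pos {a : ℝ} (ha : 0 < a) (t : ℝ) : 0 < Qa a t :=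
  Real.sqrt_pos.2 (by positivity)

lemma Qa_sq {a : ℝ} (ha : 0 < a) (t : ℝ) : Qa a t ^ 2 = Real.cos t ^ 2 + a :=
  Real.sq_sqrt (by positivity)

lemma Qa_gt {a : ℝ} (ha : 0 < a) (t : ℝ) : |Real.cos t| < Qa a t := by
  have : Real.sqrt (Real.cos t ^ 2) < Qa a t := by
    apply Real.sqrt_lt_sqrt (by positivity); linarith
  simpa [Real.sqrt_sq_eq_abs] using this

lemma cos_add_Qa_pos {a : ℝ} (ha : 0 < a) (t : ℝ) : 0 < Real.cos t + Qa a t := by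
  have h1 := Qa_gt ha t
  have h2 := neg_abs_le (Real.cos t)
  linarith

lemma Qa_hasDerivAt {a : ℝ} (ha : 0 < a) (t : ℝ) :
    HasDerivAt (Qa a) (-(Real.cos t * Real.sin t) / Qa a t) t := by
  have h1 : HasDerivAt (fun t : ℝ => Real.cos t ^ 2 + a)
      (2 * Real.cos t ^ 1 * (-Real.sin t)) t :=
    ((Real.hasDerivAt_cos t).pow 2).add_const a
  have h2 := h1.sqrt (by positivity)
  refine h2.congr_deriv ?_
  have hQ := (Qa_pos ha t).ne'
  rw [Qa] at hQ ⊢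
  field_simp

lemma nodx_hasDerivAt {H a : ℝ} (hH : H ≠ 0) (ha : 0 < a) (t : ℝ) :
    HasDerivAt (nodx H a) (ndx' H a t) t := by
  have hb : (0:ℝ) < 2 * |H| := by positivity
  have h1 : HasDerivAt (fun t => Real.cos t + Qa a t)
      (-Real.sin t + -(Real.cos t * Real.sin t) / Qa a t) t :=
    (Real.hasDerivAt_cos t).add (Qa_hasDerivAt ha t)
  have h2 := h1.div_const (2 * |H|)
  have he : nodx H a = fun t => (Real.cos t + Qa a t) / (2 * |H|) := by
    funext t; rw [nodx, Qa]
  rw [he]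
  refine h2.congr_deriv ?_
  have hQ := (Qa_pos ha t).ne'
  rw [ndx']
  field_simp; ring

lemma nodz_hasDerivAt {H a : ℝ} (hH : H ≠ 0) (ha : 0 < a) (t : ℝ) :
    HasDerivAt (nodz H a) (ndz' H a t) t := by
  have hb : (0:ℝ) < 2 * |H| := by positivity
  have hQc : Continuous (Qa a) :=
    Real.continuous_sqrt.comp ((Real.continuous_cos.pow 2).add continuous_const)
  have hfc : Continuous (fun τ => (Real.cos τ + Qa a τ) * Real.cos τ / Qa a τ) :=
    ((Real.continuous_cos.add hQc).mul Real.continuous_cos).div hQc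
      (fun τ => (Qa_pos ha τ).ne')
  have h1 : HasDerivAt (fun u => ∫ τ in (0:ℝ)..u,
      (Real.cos τ + Qa a τ) * Real.cos τ / Qa a τ)
      ((Real.cos t + Qa a t) * Real.cos t / Qa a t) t :=
    intervalIntegral.integral_hasDerivAt_right (hfc.intervalIntegrable 0 t)
      (hfc.stronglyMeasurableAtFilter _ _) hfc.continuousAt
  have h2 := h1.const_mul (1 / (2 * |H|))
  have he : nodz H a = fun t => (1 / (2 * |H|)) * ∫ τ in (0:ℝ)..t,
      (Real.cos τ + Qa a τ) * Real.cos τ / Qa a τ := by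
    funext t; rw [nodz]; simp only [Qa]
  rw [he]
  refine h2.congr_deriv ?_
  have hQ := (Qa_pos ha t).ne'
  rw [ndz']
  field_simp

lemma ndx'_hasDerivAt {H a : ℝ} (hH : H ≠ 0) (ha : 0 < a) (t : ℝ) :
    HasDerivAt (ndx' H a) (ndx'' H a t) t := by
  have hQ := (Qa_pos ha t).ne'
  have hb : (2 * |H|) ≠ 0 := by positivity
  have hf : HasDerivAt (fun t => -Real.sin t * (Real.cos t + Qa a t))
      (-Real.cos t * (Real.cos t + Qa a t) +
        -Real.sin t * (-Real.sin t + -(Real.cos t * Real.sin t) / Qa a t)) t :=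
    ((Real.hasDerivAt_sin t).neg).mul ((Real.hasDerivAt_cos t).add (Qa_hasDerivAt ha t))
  have hg : HasDerivAt (fun t => 2 * |H| * Qa a t)
      (2 * |H| * (-(Real.cos t * Real.sin t) / Qa a t)) t :=
    (Qa_hasDerivAt ha t).const_mul (2 * |H|)
  have h := hf.div hg (by positivity)
  have he : ndx' H a = fun t => -Real.sin t * (Real.cos t + Qa a t) / (2 * |H| * Qa a t) := rfl
  rw [he]
  refine h.congr_deriv ?_
  rw [ndx'']
  field_simp
  ring

lemma ndz'_hasDerivAt {H a : ℝ} (hH : H ≠ 0) (ha : 0 < a) (t : ℝ) :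
    HasDerivAt (ndz' H a) (ndz'' H a t) t := by
  have hQ := (Qa_pos ha t).ne'
  have hf : HasDerivAt (fun t => Real.cos t * (Real.cos t + Qa a t))
      (-Real.sin t * (Real.cos t + Qa a t) +
        Real.cos t * (-Real.sin t + -(Real.cos t * Real.sin t) / Qa a t)) t :=
    (Real.hasDerivAt_cos t).mul ((Real.hasDerivAt_cos t).add (Qa_hasDerivAt ha t))
  have hg : HasDerivAt (fun t => 2 * |H| * Qa a t)
      (2 * |H| * (-(Real.cos t * Real.sin t) / Qa a t)) t :=
    (Qa_hasDerivAt ha t).const_mul (2 * |H|)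
  have h := hf.div hg (by positivity)
  have he : ndz' H a = fun t => Real.cos t * (Real.cos t + Qa a t) / (2 * |H| * Qa a t) := rfl
  rw [he]
  refine h.congr_deriv ?_
  rw [ndz'']
  field_simp
  ring
noncomputable def ndphi (H a t : ℝ) : ℝ := (Real.cos t + Qa a t) / (2 * |H| * Qa a t)

lemma nodx_eq (H a t : ℝ) : nodx H a t = (Real.cos t + Qa a t) / (2 * |H|) := by
  rw [nodx, Qa]

lemma nodx_pos {H a : ℝ} (hH : H ≠ 0) (ha : 0 < a) (t : ℝ) : 0 < nodx H a t := by
  rw [nodx_eq]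
  have := cos_add_Qa_pos ha t
  positivity

lemma ndphi_pos {H a : ℝ} (hH : H ≠ 0) (ha : 0 < a) (t : ℝ) : 0 < ndphi H a t := by
  rw [ndphi]
  have h1 := cos_add_Qa_pos ha t
  have h2 := Qa_pos ha t
  positivity

lemma ndz'_eq (H a t : ℝ) : ndz' H a t = Real.cos t * ndphi H a t := by
  rw [ndz', ndphi]; ring

lemma ndx'_eq (H a t : ℝ) : ndx' H a t = -Real.sin t * ndphi H a t := by
  rw [ndx', ndphi]; ring

lemma ndsq {H a : ℝ} (hH : H ≠ 0) (ha : 0 < a) (t : ℝ) :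
    ndx' H a t ^ 2 + ndz' H a t ^ 2 = ndphi H a t ^ 2 := by
  rw [ndx'_eq, ndz'_eq]
  linear_combination (ndphi H a t ^ 2) * Real.sin_sq_add_cos_sq t

lemma pd1_nodoid {H a : ℝ} (hH : H ≠ 0) (ha : 0 < a) (p : ℝ × ℝ) :
    pd1 (nodoid H a) p =
      (ndx' H a p.1 * Real.cos p.2, ndx' H a p.1 * Real.sin p.2, ndz' H a p.1) := by
  have h : HasDerivAt (fun s : ℝ => (nodx H a s * Real.cos p.2, nodx H a s * Real.sin p.2,
        nodz H a s))
      (ndx' H a p.1 * Real.cos p.2, ndx' H a p.1 * Real.sin p.2, ndz' H a p.1) p.1 :=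
    (((nodx_hasDerivAt hH ha p.1).mul_const _).prodMk
      (((nodx_hasDerivAt hH ha p.1).mul_const _).prodMk (nodz_hasDerivAt hH ha p.1)))
  exact h.deriv

lemma pd2_nodoid {H a : ℝ} (p : ℝ × ℝ) :
    pd2 (nodoid H a) p =
      (nodx H a p.1 * -Real.sin p.2, nodx H a p.1 * Real.cos p.2, 0) := by
  have h : HasDerivAt (fun s : ℝ => (nodx H a p.1 * Real.cos s, nodx H a p.1 * Real.sin s,
        nodz H a p.1))
      (nodx H a p.1 * -Real.sin p.2, nodx H a p.1 * Real.cos p.2, 0) p.2 :=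
    (((Real.hasDerivAt_cos p.2).const_mul _).prodMk
      (((Real.hasDerivAt_sin p.2).const_mul _).prodMk (hasDerivAt_const _ _)))
  exact h.deriv

lemma ffE_nodoid {H a : ℝ} (hH : H ≠ 0) (ha : 0 < a) (p : ℝ × ℝ) :
    ffE (nodoid H a) p = ndphi H a p.1 ^ 2 := by
  rw [ffE, pd1_nodoid hH ha, dot3]
  simp only
  linear_combination (ndx' H a p.1 ^ 2) * Real.sin_sq_add_cos_sq p.2 + ndsq hH ha p.1

lemma ffF_nodoid {H a : ℝ} (hH : H ≠ 0) (ha : 0 < a) (p : ℝ × ℝ) :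
    ffF (nodoid H a) p = 0 := by
  rw [ffF, pd1_nodoid hH ha, pd2_nodoid, dot3]
  simp only
  ring

lemma ffG_nodoid {H a : ℝ} (hH : H ≠ 0) (ha : 0 < a) (p : ℝ × ℝ) :
    ffG (nodoid H a) p = nodx H a p.1 ^ 2 := by
  rw [ffG, pd2_nodoid, dot3]
  simp only
  linear_combination (nodx H a p.1 ^ 2) * Real.sin_sq_add_cos_sq p.2

lemma normalVec_nodoid {H a : ℝ} (hH : H ≠ 0) (ha : 0 < a) (p : ℝ × ℝ) :
    normalVec (nodoid H a) p =
      (-(ndz' H a p.1 * nodx H a p.1 * Real.cos p.2),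
       -(ndz' H a p.1 * nodx H a p.1 * Real.sin p.2),
       nodx H a p.1 * ndx' H a p.1) := by
  rw [normalVec, pd1_nodoid hH ha, pd2_nodoid, cross3]
  simp only [Prod.mk.injEq]
  refine ⟨by ring, by ring, ?_⟩
  linear_combination (nodx H a p.1 * ndx' H a p.1) * Real.sin_sq_add_cos_sq p.2

lemma areaDensity_nodoid {H a : ℝ} (hH : H ≠ 0) (ha : 0 < a) (p : ℝ × ℝ) :
    areaDensity (nodoid H a) p = nodx H a p.1 * ndphi H a p.1 := by
  rw [areaDensity, norm3, normalVec_nodoid hH ha, dot3]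
  simp only
  have h : -(ndz' H a p.1 * nodx H a p.1 * Real.cos p.2) *
        -(ndz' H a p.1 * nodx H a p.1 * Real.cos p.2) +
      -(ndz' H a p.1 * nodx H a p.1 * Real.sin p.2) *
        -(ndz' H a p.1 * nodx H a p.1 * Real.sin p.2) +
      nodx H a p.1 * ndx' H a p.1 * (nodx H a p.1 * ndx' H a p.1) =
      (nodx H a p.1 * ndphi H a p.1) ^ 2 := by
    linear_combination (ndz' H a p.1 ^ 2 * nodx H a p.1 ^ 2) * Real.sin_sq_add_cos_sq p.2 +
      (nodx H a p.1 ^ 2) * ndsq hH ha p.1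
  have h1 := nodx_pos hH ha p.1
  have h2 := ndphi_pos hH ha p.1
  rw [h, Real.sqrt_sq (by positivity)]
lemma unitNormal_nodoid {H a : ℝ} (hH : H ≠ 0) (ha : 0 < a) (p : ℝ × ℝ) :
    unitNormal (nodoid H a) p =
      (-(Real.cos p.1 * Real.cos p.2), -(Real.cos p.1 * Real.sin p.2), -Real.sin p.1) := by
  have harea : norm3 (normalVec (nodoid H a) p) = nodx H a p.1 * ndphi H a p.1 :=
    areaDensity_nodoid hH ha p
  rw [unitNormal, harea, normalVec_nodoid hH ha, Prod.smul_mk, Prod.smul_mk, smul_eq_mul,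
    smul_eq_mul, smul_eq_mul]
  have h1 := (nodx_pos hH ha p.1).ne'
  have h2 := (ndphi_pos hH ha p.1).ne'
  simp only [Prod.mk.injEq]
  refine ⟨?_, ?_, ?_⟩ <;> simp only [ndx'_eq, ndz'_eq] <;> field_simp <;> ring

lemma sfh11_key {H a : ℝ} (hH : H ≠ 0) (ha : 0 < a) (t : ℝ) :
    Real.cos t * ndx'' H a t + Real.sin t * ndz'' H a t = -ndphi H a t := by
  rw [ndx'', ndz'', ndphi]
  have hQ := (Qa_pos ha t).ne'
  have hb : |H| ≠ 0 := by positivity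
  have hs : Real.sin t ^ 2 = 1 - Real.cos t ^ 2 := Real.sin_sq t
  field_simp
  grind

lemma sfh11_nodoid {H a : ℝ} (hH : H ≠ 0) (ha : 0 < a) (p : ℝ × ℝ) :
    sfh11 (nodoid H a) p = ndphi H a p.1 := by
  have he : (fun s => pd1 (nodoid H a) (s, p.2)) =
      fun s => (ndx' H a s * Real.cos p.2, ndx' H a s * Real.sin p.2, ndz' H a s) := by
    funext s; exact pd1_nodoid hH ha (s, p.2)
  have h : HasDerivAt (fun s : ℝ => (ndx' H a s * Real.cos p.2, ndx' H a s * Real.sin p.2,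
        ndz' H a s))
      (ndx'' H a p.1 * Real.cos p.2, ndx'' H a p.1 * Real.sin p.2, ndz'' H a p.1) p.1 :=
    (((ndx'_hasDerivAt hH ha p.1).mul_const _).prodMk
      (((ndx'_hasDerivAt hH ha p.1).mul_const _).prodMk (ndz'_hasDerivAt hH ha p.1)))
  have hp : pd1 (pd1 (nodoid H a)) p =
      (ndx'' H a p.1 * Real.cos p.2, ndx'' H a p.1 * Real.sin p.2, ndz'' H a p.1) := by
    rw [pd1, he]; exact h.deriv
  rw [sfh11, hp, unitNormal_nodoid hH ha, dot3]
  simp only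
  linear_combination (-(Real.cos p.1 * ndx'' H a p.1)) * Real.sin_sq_add_cos_sq p.2 -
    sfh11_key hH ha p.1

lemma sfh12_nodoid {H a : ℝ} (hH : H ≠ 0) (ha : 0 < a) (p : ℝ × ℝ) :
    sfh12 (nodoid H a) p = 0 := by
  have he : (fun s => pd1 (nodoid H a) (p.1, s)) =
      fun s => (ndx' H a p.1 * Real.cos s, ndx' H a p.1 * Real.sin s, ndz' H a p.1) := by
    funext s; exact pd1_nodoid hH ha (p.1, s)
  have h : HasDerivAt (fun s : ℝ => (ndx' H a p.1 * Real.cos s, ndx' H a p.1 * Real.sin s,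
        ndz' H a p.1))
      (ndx' H a p.1 * -Real.sin p.2, ndx' H a p.1 * Real.cos p.2, 0) p.2 :=
    (((Real.hasDerivAt_cos p.2).const_mul _).prodMk
      (((Real.hasDerivAt_sin p.2).const_mul _).prodMk (hasDerivAt_const _ _)))
  have hp : pd2 (pd1 (nodoid H a)) p =
      (ndx' H a p.1 * -Real.sin p.2, ndx' H a p.1 * Real.cos p.2, 0) := by
    rw [pd2, he]; exact h.deriv
  rw [sfh12, hp, unitNormal_nodoid hH ha, dot3]
  simp only
  ring

lemma sfh22_nodoid {H a : ℝ} (hH : H ≠ 0) (ha : 0 < a) (p : ℝ × ℝ) :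
    sfh22 (nodoid H a) p = nodx H a p.1 * Real.cos p.1 := by
  have he : (fun s => pd2 (nodoid H a) (p.1, s)) =
      fun s => (nodx H a p.1 * -Real.sin s, nodx H a p.1 * Real.cos s, 0) := by
    funext s; exact pd2_nodoid (p.1, s)
  have h : HasDerivAt (fun s : ℝ => (nodx H a p.1 * -Real.sin s, nodx H a p.1 * Real.cos s,
        (0:ℝ)))
      (nodx H a p.1 * -Real.cos p.2, nodx H a p.1 * -Real.sin p.2, 0) p.2 :=
    ((((Real.hasDerivAt_sin p.2).neg).const_mul _).prodMk
      (((Real.hasDerivAt_cos p.2).const_mul _).prodMk (hasDerivAt_const _ _)))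
  have hp : pd2 (pd2 (nodoid H a)) p =
      (nodx H a p.1 * -Real.cos p.2, nodx H a p.1 * -Real.sin p.2, 0) := by
    rw [pd2, he]; exact h.deriv
  rw [sfh22, hp, unitNormal_nodoid hH ha, dot3]
  simp only
  linear_combination (nodx H a p.1 * Real.cos p.1) * Real.sin_sq_add_cos_sq p.2

lemma gaussCurv_nodoid {H a : ℝ} (hH : H ≠ 0) (ha : 0 < a) (p : ℝ × ℝ) :
    gaussCurv (nodoid H a) p =
      Real.cos p.1 * (2 * |H|) ^ 2 * Qa a p.1 / (Real.cos p.1 + Qa a p.1) ^ 2 := by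
  rw [gaussCurv, ffE_nodoid hH ha, ffF_nodoid hH ha, ffG_nodoid hH ha, sfh11_nodoid hH ha,
    sfh12_nodoid hH ha, sfh22_nodoid hH ha, nodx_eq, ndphi]
  have hQ := (Qa_pos ha p.1).ne'
  have hc := (cos_add_Qa_pos ha p.1).ne'
  have hb : |H| ≠ 0 := by positivity
  field_simp
  ring
lemma jacobi_nodoid {H a : ℝ} (hH : H ≠ 0) (ha : 0 < a) (v : R3) (p : ℝ × ℝ) :
    laplaceBeltrami (nodoid H a) (fun q => dot3 v (nodN q)) p +
      (4 * H ^ 2 - 2 * gaussCurv (nodoid H a) p) * dot3 v (nodN p) = 0 := by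
  have pd1psi : ∀ q : ℝ × ℝ, pd1 (fun q => dot3 v (nodN q)) q =
      v.1 * (-Real.sin q.1 * Real.cos q.2) + v.2.1 * (-Real.sin q.1 * Real.sin q.2) +
        v.2.2 * Real.cos q.1 := by
    intro q
    have h : HasDerivAt (fun s : ℝ => v.1 * (Real.cos s * Real.cos q.2) +
        v.2.1 * (Real.cos s * Real.sin q.2) + v.2.2 * Real.sin s)
        (v.1 * (-Real.sin q.1 * Real.cos q.2) + v.2.1 * (-Real.sin q.1 * Real.sin q.2) +
          v.2.2 * Real.cos q.1) q.1 :=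
      ((((Real.hasDerivAt_cos q.1).mul_const _).const_mul _).add
        (((Real.hasDerivAt_cos q.1).mul_const _).const_mul _)).add
        ((Real.hasDerivAt_sin q.1).const_mul _)
    exact h.deriv
  have pd2psi : ∀ q : ℝ × ℝ, pd2 (fun q => dot3 v (nodN q)) q =
      v.1 * (Real.cos q.1 * -Real.sin q.2) + v.2.1 * (Real.cos q.1 * Real.cos q.2) + 0 := by
    intro q
    have h : HasDerivAt (fun s : ℝ => v.1 * (Real.cos q.1 * Real.cos s) +
        v.2.1 * (Real.cos q.1 * Real.sin s) + v.2.2 * Real.sin q.1)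
        (v.1 * (Real.cos q.1 * -Real.sin q.2) + v.2.1 * (Real.cos q.1 * Real.cos q.2) + 0) q.2 :=
      ((((Real.hasDerivAt_cos q.2).const_mul _).const_mul _).add
        (((Real.hasDerivAt_sin q.2).const_mul _).const_mul _)).add
        (hasDerivAt_const _ _)
    exact h.deriv
  have hQp := fun t => (Qa_pos ha t).ne'
  have hcp := fun t => (cos_add_Qa_pos ha t).ne'
  have hb : |H| ≠ 0 := by positivity
  have hfun1 : (fun q => (ffG (nodoid H a) q * pd1 (fun q => dot3 v (nodN q)) q -
        ffF (nodoid H a) q * pd2 (fun q => dot3 v (nodN q)) q) / areaDensity (nodoid H a) q) =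
      fun q => Qa a q.1 * (v.1 * (-Real.sin q.1 * Real.cos q.2) +
        v.2.1 * (-Real.sin q.1 * Real.sin q.2) + v.2.2 * Real.cos q.1) := by
    funext q
    rw [ffG_nodoid hH ha, ffF_nodoid hH ha, areaDensity_nodoid hH ha, pd1psi, pd2psi,
      nodx_eq, ndphi]
    have hQ1 := hQp q.1
    have hc1 := hcp q.1
    field_simp
    ring
  have hfun2 : (fun q => (ffE (nodoid H a) q * pd2 (fun q => dot3 v (nodN q)) q -
        ffF (nodoid H a) q * pd1 (fun q => dot3 v (nodN q)) q) / areaDensity (nodoid H a) q) =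
      fun q => (v.1 * (Real.cos q.1 * -Real.sin q.2) + v.2.1 * (Real.cos q.1 * Real.cos q.2) + 0) /
        Qa a q.1 := by
    funext q
    rw [ffE_nodoid hH ha, ffF_nodoid hH ha, areaDensity_nodoid hH ha, pd1psi, pd2psi,
      nodx_eq, ndphi]
    have hQ1 := hQp q.1
    have hc1 := hcp q.1
    field_simp
    ring
  have hpd1 : pd1 (fun q => Qa a q.1 * (v.1 * (-Real.sin q.1 * Real.cos q.2) +
        v.2.1 * (-Real.sin q.1 * Real.sin q.2) + v.2.2 * Real.cos q.1)) p =
      -(Real.cos p.1 * Real.sin p.1) / Qa a p.1 *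
          (v.1 * (-Real.sin p.1 * Real.cos p.2) + v.2.1 * (-Real.sin p.1 * Real.sin p.2) +
            v.2.2 * Real.cos p.1) +
        Qa a p.1 * (v.1 * (-Real.cos p.1 * Real.cos p.2) +
          v.2.1 * (-Real.cos p.1 * Real.sin p.2) + v.2.2 * -Real.sin p.1) := by
    have h2 : HasDerivAt (fun s : ℝ => v.1 * (-Real.sin s * Real.cos p.2) +
        v.2.1 * (-Real.sin s * Real.sin p.2) + v.2.2 * Real.cos s)
        (v.1 * (-Real.cos p.1 * Real.cos p.2) + v.2.1 * (-Real.cos p.1 * Real.sin p.2) +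
          v.2.2 * -Real.sin p.1) p.1 :=
      (((((Real.hasDerivAt_sin p.1).neg).mul_const _).const_mul _).add
        ((((Real.hasDerivAt_sin p.1).neg).mul_const _).const_mul _)).add
        ((Real.hasDerivAt_cos p.1).const_mul _)
    exact ((Qa_hasDerivAt ha p.1).mul h2).deriv
  have hpd2 : pd2 (fun q => (v.1 * (Real.cos q.1 * -Real.sin q.2) +
        v.2.1 * (Real.cos q.1 * Real.cos q.2) + 0) / Qa a q.1) p =
      (v.1 * (Real.cos p.1 * -Real.cos p.2) + v.2.1 * (Real.cos p.1 * -Real.sin p.2) + 0) /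
        Qa a p.1 := by
    have h2 : HasDerivAt (fun s : ℝ => v.1 * (Real.cos p.1 * -Real.sin s) +
        v.2.1 * (Real.cos p.1 * Real.cos s) + 0)
        (v.1 * (Real.cos p.1 * -Real.cos p.2) + v.2.1 * (Real.cos p.1 * -Real.sin p.2) + 0) p.2 :=
      (((((Real.hasDerivAt_sin p.2).neg).const_mul _).const_mul _).add
        (((Real.hasDerivAt_cos p.2).const_mul _).const_mul _)).add
        (hasDerivAt_const _ _)
    exact (h2.div_const (Qa a p.1)).deriv
  rw [laplaceBeltrami, hfun1, hfun2, hpd1, hpd2, gaussCurv_nodoid hH ha,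
    areaDensity_nodoid hH ha, nodx_eq, ndphi]
  simp only [dot3, nodN]
  have hQ2 : Qa a p.1 ^ 2 = Real.cos p.1 ^ 2 + a := Qa_sq ha p.1
  have hs : Real.sin p.1 ^ 2 = 1 - Real.cos p.1 ^ 2 := Real.sin_sq p.1
  have hth : Real.sin p.2 ^ 2 = 1 - Real.cos p.2 ^ 2 := Real.sin_sq p.2
  have hH2 : |H| ^ 2 = H ^ 2 := sq_abs H
  have hQ1 := hQp p.1
  have hc1 := hcp p.1
  field_simp
  grind

/-- For each fixed `v ∈ ℝ³`, the function `ψ = ⟨v,N⟩` on the nodoid satisfies the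
Jacobi equation `Δψ + ‖S‖²ψ = 0` with `‖S‖² = 4H² − 2K`; moreover `ψ = ⟨e₃,N⟩`
vanishes on the boundary `∂N_{t₀}` iff `t₀ ∈ πℕ`, while `ψ = ⟨eᵢ,N⟩`, `i = 1,2`,
vanishes on the boundary iff `t₀ ∈ π/2 + πℕ`. -/
theorem nodoid_jacobi_fields_and_boundary_vanishing
    (H a : ℝ) (hH : H ≠ 0) (ha : 0 < a) :
    (∀ v : R3, ∀ p : ℝ × ℝ,
        laplaceBeltrami (nodoid H a) (fun q => dot3 v (nodN q)) p +
          (4 * H ^ 2 - 2 * gaussCurv (nodoid H a) p) * dot3 v (nodN p) = 0) ∧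
    (∀ t₀ : ℝ, 0 < t₀ →
      ((∀ θ : ℝ, dot3 e3 (nodN (t₀, θ)) = 0 ∧ dot3 e3 (nodN (-t₀, θ)) = 0) ↔
        ∃ k : ℕ, t₀ = k * π)) ∧
    (∀ t₀ : ℝ, 0 < t₀ →
      ((∀ θ : ℝ, dot3 e1 (nodN (t₀, θ)) = 0 ∧ dot3 e1 (nodN (-t₀, θ)) = 0 ∧
          dot3 e2 (nodN (t₀, θ)) = 0 ∧ dot3 e2 (nodN (-t₀, θ)) = 0) ↔
        ∃ k : ℕ, t₀ = π / 2 + k * π)) := by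
  have hπ := Real.pi_pos
  refine ⟨fun v p => jacobi_nodoid hH ha v p, fun t₀ ht₀ => ?_, fun t₀ ht₀ => ?_⟩
  · constructor
    · intro h
      have h0 := (h 0).1
      simp [dot3, e3, nodN] at h0
      rw [Real.sin_eq_zero_iff] at h0
      obtain ⟨n, hn⟩ := h0
      have hnpos : (0:ℝ) < (n:ℝ) := by nlinarith
      have hn0 : (0:ℤ) ≤ n := by exact_mod_cast hnpos.le
      refine ⟨n.toNat, ?_⟩
      have hcast : ((n.toNat : ℕ) : ℝ) = (n : ℝ) := by
        exact_mod_cast congrArg (fun z : ℤ => (z : ℝ)) (Int.toNat_of_nonneg hn0)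
      rw [hcast, hn]
    · rintro ⟨k, rfl⟩ θ
      constructor <;> simp [dot3, e3, nodN, Real.sin_nat_mul_pi]
  · constructor
    · intro h
      have h0 := (h 0).1
      simp [dot3, e1, nodN] at h0
      rw [Real.cos_eq_zero_iff] at h0
      obtain ⟨n, hn⟩ := h0
      have hnpos : (0:ℝ) < 2 * (n:ℝ) + 1 := by nlinarith
      have hn0 : (0:ℤ) ≤ n := by
        have : (0:ℤ) < 2 * n + 1 := by exact_mod_cast hnpos
        omega
      refine ⟨n.toNat, ?_⟩
      have hcast : ((n.toNat : ℕ) : ℝ) = (n : ℝ) := by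
        exact_mod_cast congrArg (fun z : ℤ => (z : ℝ)) (Int.toNat_of_nonneg hn0)
      rw [hcast, hn]; ring
    · rintro ⟨k, rfl⟩ θ
      have hc : Real.cos (π / 2 + (k : ℝ) * π) = 0 := by
        rw [Real.cos_eq_zero_iff]
        exact ⟨(k : ℤ), by push_cast; ring⟩
      have hc' : Real.cos (-(π / 2 + (k : ℝ) * π)) = 0 := by rw [Real.cos_neg]; exact hc
      have hc'' : Real.cos (-((k : ℝ) * π) + -(π / 2)) = 0 := by
        rw [show (-((k : ℝ) * π) + -(π / 2) : ℝ) = -(π / 2 + (k : ℝ) * π) by ring]; exact hc'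
      refine ⟨?_, ?_, ?_, ?_⟩ <;> simp [dot3, e1, e2, nodN, hc, hc', hc'']
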